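/- Let 𝔅 be a bornology with closed base on a metric space X. Then X satisfies U_fin(𝒪_{𝔅ˢ}, 𝒪_{𝔅ˢ}) if and only if X satisfies U_fin(Γ_{𝔅ˢ}, 𝒪_{𝔅ˢ}). -/

import Mathlib

open Set Metric Filter

/-- A bornology on a metric space: an ideal of subsets covering `X`. -/
structure BornologyOn (X : Type*) [MetricSpace X] where
  sets : Set (Set X)
  union_mem : ∀ {A B : Set X}, A ∈ sets → B ∈ sets → A ∪ B ∈ sets
  subset_mem : ∀ {A B : Set X}, A ∈ sets → B ⊆ A → B ∈ sets
  covers : ∀ x : X, ∃ A ∈ sets, x ∈ A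

variable {X : Type*} [MetricSpace X]

/-- `𝔅` has a closed base: a cofinal subfamily consisting of closed sets. -/
def HasClosedBase (𝔅 : BornologyOn X) : Prop :=
  ∃ base ⊆ 𝔅.sets, (∀ C ∈ base, IsClosed C) ∧ ∀ A ∈ 𝔅.sets, ∃ C ∈ base, A ⊆ C

/-- The `δ`-enlargement `B^δ = ⋃_{x ∈ B} S(x, δ)`. -/
def enlarge (B : Set X) (δ : ℝ) : Set X := ⋃ x ∈ B, ball x δ

/-- A `𝔅ˢ`-cover: `X ∉ 𝒰` and every `B ∈ 𝔅` has `B^δ ⊆ U` for some `U ∈ 𝒰`, `δ > 0`. -/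
def IsBCover (𝔅 : BornologyOn X) (𝒰 : Set (Set X)) : Prop :=
  univ ∉ 𝒰 ∧ ∀ B ∈ 𝔅.sets, ∃ U ∈ 𝒰, ∃ δ > 0, enlarge B δ ⊆ U

/-- An open `𝔅ˢ`-cover. -/
def IsOpenBCover (𝔅 : BornologyOn X) (𝒰 : Set (Set X)) : Prop :=
  (∀ U ∈ 𝒰, IsOpen U) ∧ (∀ x : X, ∃ U ∈ 𝒰, x ∈ U) ∧ IsBCover 𝔅 𝒰

/-- A `γ_{𝔅ˢ}`-cover (set form): infinite family of open sets such that for each `B ∈ 𝔅`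
all but finitely many members contain some enlargement of `B`. -/
def IsGammaBCover (𝔅 : BornologyOn X) (𝒰 : Set (Set X)) : Prop :=
  𝒰.Infinite ∧ (∀ U ∈ 𝒰, IsOpen U) ∧
    ∀ B ∈ 𝔅.sets, {U ∈ 𝒰 | ¬ ∃ δ > 0, enlarge B δ ⊆ U}.Finite

/-- A `γ_{𝔅ˢ}`-cover given as a sequence `{Uₙ}`: infinite, open, and for each `B ∈ 𝔅`
there are `n₀` and `δₙ > 0` with `B^{δₙ} ⊆ Uₙ` for all `n ≥ n₀`. -/
def IsGammaBSeq (𝔅 : BornologyOn X) (U : ℕ → Set X) : Prop :=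
  (Set.range U).Infinite ∧ (∀ n, IsOpen (U n)) ∧
    ∀ B ∈ 𝔅.sets, ∃ n₀, ∀ n ≥ n₀, ∃ δ > 0, enlarge B δ ⊆ U n

/-- A `γ`-cover: infinite family of open sets, every point in all but finitely many members. -/
def IsGammaCover (𝒰 : Set (Set X)) : Prop :=
  𝒰.Infinite ∧ (∀ U ∈ 𝒰, IsOpen U) ∧ ∀ x : X, {U ∈ 𝒰 | x ∉ U}.Finite

/-- An open cover of `X`. -/
def IsOpenCover (𝒰 : Set (Set X)) : Prop :=
  (∀ U ∈ 𝒰, IsOpen U) ∧ ∀ x : X, ∃ U ∈ 𝒰, x ∈ U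

/-- The family `𝒪_{𝔅ˢ}` of countable open `𝔅ˢ`-covers. -/
def OBs (𝔅 : BornologyOn X) : Set (Set (Set X)) :=
  {𝒰 | 𝒰.Countable ∧ IsOpenBCover 𝔅 𝒰}

/-- The family `Γ_{𝔅ˢ}` of countable `γ_{𝔅ˢ}`-covers. -/
def GBs (𝔅 : BornologyOn X) : Set (Set (Set X)) :=
  {𝒰 | 𝒰.Countable ∧ IsGammaBCover 𝔅 𝒰}

/-- The family `𝒪` of countable open covers. -/
def Ocov (X : Type*) [MetricSpace X] : Set (Set (Set X)) :=
  {𝒰 | 𝒰.Countable ∧ IsOpenCover 𝒰}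

/-- The selection principle `S₁(𝒜, ℬ)`. -/
def S1 (𝒜 ℬ : Set (Set (Set X))) : Prop :=
  ∀ 𝒰 : ℕ → Set (Set X), (∀ n, 𝒰 n ∈ 𝒜) →
    ∃ sel : ℕ → Set X, (∀ n, sel n ∈ 𝒰 n) ∧ Set.range sel ∈ ℬ

/-- The selection principle `S_fin(𝒜, ℬ)`. -/
def Sfin (𝒜 ℬ : Set (Set (Set X))) : Prop :=
  ∀ 𝒰 : ℕ → Set (Set X), (∀ n, 𝒰 n ∈ 𝒜) →
    ∃ 𝒱 : ℕ → Set (Set X), (∀ n, 𝒱 n ⊆ 𝒰 n ∧ (𝒱 n).Finite) ∧ (⋃ n, 𝒱 n) ∈ ℬ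

/-- The selection principle `U_fin(𝒜, ℬ)`. -/
def Ufin (𝒜 ℬ : Set (Set (Set X))) : Prop :=
  ∀ 𝒰 : ℕ → Set (Set X), (∀ n, 𝒰 n ∈ 𝒜) →
    ∃ 𝒱 : ℕ → Set (Set X), (∀ n, 𝒱 n ⊆ 𝒰 n ∧ (𝒱 n).Finite) ∧
      ((Set.range fun n => ⋃₀ 𝒱 n) ∈ ℬ ∨ ∃ n, ⋃₀ 𝒱 n = univ)

/-- ONE has a winning strategy in `G₁(𝒜, ℬ)`. -/
def OneWinsG1 (𝒜 ℬ : Set (Set (Set X))) : Prop :=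
  ∃ σ : List (Set X) → Set (Set X),
    (∀ h, σ h ∈ 𝒜) ∧
    ∀ play : ℕ → Set X,
      (∀ n, play n ∈ σ (List.ofFn fun i : Fin n => play i.1)) →
      Set.range play ∉ ℬ

/-- ONE has a winning strategy in `G_fin(𝒜, ℬ)`. -/
def OneWinsGfin (𝒜 ℬ : Set (Set (Set X))) : Prop :=
  ∃ σ : List (Set (Set X)) → Set (Set X),
    (∀ h, σ h ∈ 𝒜) ∧
    ∀ play : ℕ → Set (Set X),
      (∀ n, play n ⊆ σ (List.ofFn fun i : Fin n => play i.1) ∧ (play n).Finite) →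
      (⋃ n, play n) ∉ ℬ

/-- The winning condition in the `𝔅ˢ`-Hurewicz game / property: every `B ∈ 𝔅` is
eventually `δ`-enlarged into some member of `𝒱ₙ`. -/
def HurSel (𝔅 : BornologyOn X) (𝒱 : ℕ → Set (Set X)) : Prop :=
  ∀ B ∈ 𝔅.sets, ∃ n₀, ∀ n ≥ n₀, ∃ δ > 0, ∃ U ∈ 𝒱 n, enlarge B δ ⊆ U

/-- The strong `𝔅`-Hurewicz property. -/
def BsHurewicz (𝔅 : BornologyOn X) : Prop :=
  ∀ 𝒰 : ℕ → Set (Set X), (∀ n, 𝒰 n ∈ OBs 𝔅) →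
    ∃ 𝒱 : ℕ → Set (Set X), (∀ n, 𝒱 n ⊆ 𝒰 n ∧ (𝒱 n).Finite) ∧ HurSel 𝔅 𝒱

/-- ONE has a winning strategy in the `𝔅ˢ`-Hurewicz game. -/
def OneWinsHurewicz (𝔅 : BornologyOn X) : Prop :=
  ∃ σ : List (Set (Set X)) → Set (Set X),
    (∀ h, σ h ∈ OBs 𝔅) ∧
    ∀ play : ℕ → Set (Set X),
      (∀ n, play n ⊆ σ (List.ofFn fun i : Fin n => play i.1) ∧ (play n).Finite) →
      ¬ HurSel 𝔅 play

/-- A `𝔅ˢ`-groupable cover. -/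
def BsGroupable (𝔅 : BornologyOn X) (𝒰 : Set (Set X)) : Prop :=
  ∃ 𝒢 : ℕ → Set (Set X), (∀ n, (𝒢 n).Finite) ∧
    (∀ m n, m ≠ n → Disjoint (𝒢 m) (𝒢 n)) ∧ (⋃ n, 𝒢 n) = 𝒰 ∧ HurSel 𝔅 𝒢

/-- The family `𝒪_{𝔅ˢ}^{gp}` of `𝔅ˢ`-groupable open covers. -/
def OBsgp (𝔅 : BornologyOn X) : Set (Set (Set X)) :=
  {𝒰 | IsOpenCover 𝒰 ∧ BsGroupable 𝔅 𝒰}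

/-- The basic `τ_𝔅ˢ` neighbourhood `[B, ε]ˢ(f)` in `C(X)`. -/
def sball (f : C(X, ℝ)) (B : Set X) (ε : ℝ) : Set C(X, ℝ) :=
  {g | ∃ δ > 0, ∀ x ∈ enlarge B δ, |f x - g x| < ε}

/-- The topology `τ_𝔅ˢ` of strong uniform convergence on `𝔅` on `C(X)`. -/
def tauBs (𝔅 : BornologyOn X) : TopologicalSpace C(X, ℝ) :=
  TopologicalSpace.generateFrom
    {S | ∃ f : C(X, ℝ), ∃ B ∈ 𝔅.sets, ∃ ε > 0, S = sball f B ε}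

/-- Countable `T`-tightness of a topological space. -/
def CountableTTightness {Y : Type*} (t : TopologicalSpace Y) : Prop :=
  ∀ ρ : Cardinal.{0}, ρ.IsRegular → Cardinal.aleph0 < ρ →
    ∀ A : Ordinal.{0} → Set Y, (∀ α β, α ≤ β → A α ⊆ A β) →
      (∀ α, α < ρ.ord → @IsClosed _ t (A α)) →
      @IsClosed _ t (⋃ α ∈ {α | α < ρ.ord}, A α)

lemma gbs_mem_obs (𝔅 : BornologyOn X) {𝒰 : Set (Set X)}
    (h : 𝒰 ∈ GBs 𝔅) (hu : univ ∉ 𝒰) : 𝒰 ∈ OBs 𝔅 := by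
  obtain ⟨hc, hinf, hop, hB⟩ := h
  refine ⟨hc, hop, ?_, hu, ?_⟩
  · intro x
    obtain ⟨A, hA, hxA⟩ := 𝔅.covers x
    have hx : ({x} : Set X) ∈ 𝔅.sets := 𝔅.subset_mem hA (by simpa using hxA)
    obtain ⟨U, hU⟩ := (hinf.diff (hB _ hx)).nonempty
    refine ⟨U, hU.1, ?_⟩
    have : ∃ δ > 0, enlarge {x} δ ⊆ U := by
      by_contra hcon
      exact hU.2 ⟨hU.1, hcon⟩
    obtain ⟨δ, hδ, hsub⟩ := this
    exact hsub (by simp [enlarge, Metric.mem_ball_self hδ])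
  · intro B hBs
    obtain ⟨U, hU⟩ := (hinf.diff (hB _ hBs)).nonempty
    refine ⟨U, hU.1, ?_⟩
    by_contra hcon
    exact hU.2 ⟨hU.1, hcon⟩

lemma sUnion_subset_W {W : ℕ → Set X} (hmono : Monotone W)
    {𝒱 : Set (Set X)} (hfin : 𝒱.Finite) (hsub : 𝒱 ⊆ Set.range W) :
    ∃ m, ⋃₀ 𝒱 ⊆ W m := by
  classical
  set g : Set X → ℕ := fun V => if h : ∃ m, W m = V then h.choose else 0 with hg
  have hgV : ∀ V ∈ 𝒱, W (g V) = V := by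
    intro V hV
    have h : ∃ m, W m = V := hsub hV
    simp only [hg]
    rw [dif_pos h]
    exact h.choose_spec
  refine ⟨hfin.toFinset.sup g, ?_⟩
  rintro x ⟨V, hV, hxV⟩
  have : x ∈ W (g V) := (hgV V hV).symm ▸ hxV
  exact hmono (Finset.le_sup (hfin.mem_toFinset.2 hV)) this

theorem stmt10 (𝔅 : BornologyOn X) (hcb : HasClosedBase 𝔅) :
    Ufin (OBs 𝔅) (OBs 𝔅) ↔ Ufin (GBs 𝔅) (OBs 𝔅) := by
  classical
  constructor
  · -- Ufin(OBs, OBs) → Ufin(GBs, OBs)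
    intro H 𝒰 h𝒰
    by_cases huniv : ∃ n, univ ∈ 𝒰 n
    · obtain ⟨n, hn⟩ := huniv
      refine ⟨fun m => if m = n then {univ} else ∅, ?_, Or.inr ⟨n, by simp⟩⟩
      intro m
      by_cases hm : m = n <;> simp [hm, hn, singleton_subset_iff]
    · push_neg at huniv
      exact H 𝒰 fun n => gbs_mem_obs 𝔅 (h𝒰 n) (huniv n)
  · -- Ufin(GBs, OBs) → Ufin(OBs, OBs)
    intro H 𝒰 h𝒰
    by_cases hX : Nonempty X
    swap
    · refine ⟨fun _ => ∅, fun n => ⟨empty_subset _, finite_empty⟩, Or.inr ⟨0, ?_⟩⟩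
      rw [eq_univ_iff_forall]
      intro x; exact absurd ⟨x⟩ hX
    by_cases hfin : ∃ n, ∃ F ⊆ 𝒰 n, F.Finite ∧ ⋃₀ F = univ
    · obtain ⟨n, F, hF, hFfin, hFu⟩ := hfin
      refine ⟨fun m => if m = n then F else ∅, ?_, Or.inr ⟨n, by simp [hFu]⟩⟩
      intro m
      by_cases hm : m = n <;> simp [hm, hF, hFfin]
    · push_neg at hfin
      -- enumerate each cover
      have hne : ∀ n, (𝒰 n).Nonempty := by
        intro n
        obtain ⟨x⟩ := hX
        obtain ⟨U, hU, _⟩ := (h𝒰 n).2.2.1 x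
        exact ⟨U, hU⟩
      choose f hf using fun n => ((h𝒰 n).1).exists_eq_range (hne n)
      set W : ℕ → ℕ → Set X := fun n m => ⋃ k ∈ Set.Iic m, f n k with hW
      have hWmono : ∀ n, Monotone (W n) := by
        intro n a b hab
        exact biUnion_subset_biUnion_left (Iic_subset_Iic.2 hab)
      have hWopen : ∀ n m, IsOpen (W n m) := by
        intro n m
        refine isOpen_biUnion fun k _ => ?_
        exact (h𝒰 n).2.1 (f n k) (by rw [hf n]; exact mem_range_self k)
      have hWfin : ∀ n m, ∃ F ⊆ 𝒰 n, F.Finite ∧ ⋃₀ F = W n m := by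
        intro n m
        refine ⟨f n '' Set.Iic m, ?_, (Set.finite_Iic m).image _, ?_⟩
        · rw [hf n]; exact image_subset_range _ _
        · rw [sUnion_image]
      have hWne : ∀ n m, W n m ≠ univ := by
        intro n m h
        obtain ⟨F, hF1, hF2, hF3⟩ := hWfin n m
        exact hfin n F hF1 hF2 (hF3.trans h)
      -- each range (W n) is a γ_Bˢ cover
      have hGW : ∀ n, Set.range (W n) ∈ GBs 𝔅 := by
        intro n
        refine ⟨countable_range _, ?_, ?_, ?_⟩
        · -- infinite
          intro hfinr
          obtain ⟨V, hVmem, hVmax⟩ : ∃ V ∈ range (W n), ∀ V' ∈ range (W n),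
              id V ≤ id V' → id V = id V' := by
            obtain ⟨V, hV1, hV2⟩ := Set.Finite.exists_maximalFor id _ hfinr (range_nonempty _)
            exact ⟨V, hV1, fun V' hV' h => le_antisymm h (hV2 hV' h)⟩
          obtain ⟨m₀, hm₀⟩ := hVmem
          apply hWne n m₀
          rw [hm₀, eq_univ_iff_forall]
          intro x
          obtain ⟨U, hU, hxU⟩ := (h𝒰 n).2.2.1 x
          rw [hf n] at hU
          obtain ⟨k, hk⟩ := hU
          have h1 : W n m₀ ⊆ W n (max k m₀) := hWmono n (le_max_right _ _)
          have h2 : W n (max k m₀) = W n m₀ := by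
            have := hVmax (W n (max k m₀)) (mem_range_self _) (hm₀ ▸ h1)
            simp only [id] at this
            rw [← this, hm₀]
          rw [← hm₀, ← h2]
          have : x ∈ f n k := hk ▸ hxU
          exact mem_biUnion (le_max_left k m₀) this
        · rintro V ⟨m, rfl⟩; exact hWopen n m
        · intro B hB
          obtain ⟨U, hU, δ, hδ, hsub⟩ := (h𝒰 n).2.2.2.2 B hB
          rw [hf n] at hU
          obtain ⟨k₀, hk₀⟩ := hU
          apply Set.Finite.subset ((Set.finite_Iio k₀).image (W n))
          rintro V ⟨⟨m, rfl⟩, hbad⟩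
          by_cases hm : m < k₀
          · exact ⟨m, hm, rfl⟩
          · exfalso
            apply hbad
            refine ⟨δ, hδ, hsub.trans ?_⟩
            rw [← hk₀]
            exact subset_biUnion_of_mem (u := fun k => f n k) (not_lt.1 hm)
      obtain ⟨𝒱, h𝒱, hdisj⟩ := H (fun n => Set.range (W n)) hGW
      -- for each n pick m with ⋃₀ 𝒱 n ⊆ W n m
      have hMn : ∀ n, ∃ m, ⋃₀ 𝒱 n ⊆ W n m := fun n =>
        sUnion_subset_W (hWmono n) (h𝒱 n).2 (h𝒱 n).1
      choose M hM using hMn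
      refine ⟨fun n => f n '' Set.Iic (M n), ?_, ?_⟩
      · intro n
        constructor
        · rw [hf n]; exact image_subset_range _ _
        · exact (Set.finite_Iic _).image _
      have hWeq : ∀ n, ⋃₀ (f n '' Set.Iic (M n)) = W n (M n) := by
        intro n; rw [sUnion_image]
      rcases hdisj with hmem | ⟨n, hn⟩
      swap
      · refine Or.inr ⟨n, ?_⟩
        rw [hWeq n, eq_univ_iff_forall]
        intro x
        exact hM n (hn ▸ mem_univ x)
      · obtain ⟨hcnt, hop, hcov, huniv', hbcov⟩ := hmem
        refine Or.inl ⟨countable_range _, ?_, ?_, ?_, ?_⟩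
        · rintro U ⟨n, rfl⟩
          show IsOpen (⋃₀ (f n '' Set.Iic (M n)))
          rw [hWeq n]; exact hWopen n (M n)
        · intro x
          obtain ⟨S, ⟨n, rfl⟩, hxS⟩ := hcov x
          refine ⟨_, mem_range_self n, ?_⟩
          show x ∈ ⋃₀ (f n '' Set.Iic (M n))
          rw [hWeq n]; exact hM n hxS
        · rintro ⟨n, hn⟩
          obtain ⟨F, hF1, hF2, hF3⟩ := hWfin n (M n)
          have hn' : ⋃₀ (f n '' Set.Iic (M n)) = univ := hn
          exact hfin n F hF1 hF2 (hF3.trans ((hWeq n).symm.trans hn'))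
        · intro B hB
          obtain ⟨S, ⟨n, rfl⟩, δ, hδ, hsub⟩ := hbcov B hB
          refine ⟨_, mem_range_self n, δ, hδ, ?_⟩
          show enlarge B δ ⊆ ⋃₀ (f n '' Set.Iic (M n))
          rw [hWeq n]; exact hsub.trans (hM n)
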